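/- Let m ≥ 1 be an integer and x ∈ O, and set M = (ϖ, ϖ^{1−2m}·x; 0, ϖ^{−1}) in SL₂(F). If x ∈ 𝔪^{2m−2} then M ∈ K₀·α₀^{−1}·I(1); if x ∉ 𝔪^{2m−2} then there exists an integer l ≤ −2 such that M ∈ K₀·α₀^{l}·I(1), where α₀^l = diag(ϖ^{−l}, ϖ^{l}). -/

import Mathlib

open Matrix Pointwise

/-- For `m ≥ 1` and `x ∈ O`, set
`M = (ϖ, ϖ^{1−2m}·x; 0, ϖ^{−1})`. If `x ∈ 𝔪^{2m−2}` then `M ∈ K₀·α₀^{−1}·I(1)`;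
otherwise there is `l ≤ −2` with `M ∈ K₀·α₀^{l}·I(1)`, where
`α₀^l = diag(ϖ^{−l}, ϖ^{l})`. -/
theorem stmt_14
    (O : Type*) [CommRing O] [IsDomain O] [IsDiscreteValuationRing O]
    (ϖ : O) (hϖ : Irreducible ϖ)
    (F : Type*) [Field F] [Algebra O F] [IsFractionRing O F]
    (m : ℕ) (hm : 1 ≤ m) (x : O)
    (K₀ : Set (Matrix (Fin 2) (Fin 2) F))
    (hK₀ : K₀ = {M | M.det = 1 ∧ ∀ i j, ∃ a : O, M i j = algebraMap O F a})
    (I1 : Set (Matrix (Fin 2) (Fin 2) F))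
    (hI1 : I1 = {M | ∃ a b c d : O,
        M = !![algebraMap O F a, algebraMap O F b; algebraMap O F c, algebraMap O F d] ∧
        a * d - b * c = 1 ∧
        a - 1 ∈ IsLocalRing.maximalIdeal O ∧ d - 1 ∈ IsLocalRing.maximalIdeal O ∧
        c ∈ IsLocalRing.maximalIdeal O})
    (α₀ : ℤ → Matrix (Fin 2) (Fin 2) F)
    (hα₀ : ∀ l : ℤ, α₀ l = !![algebraMap O F ϖ ^ (-l), 0; 0, algebraMap O F ϖ ^ l])
    (M : Matrix (Fin 2) (Fin 2) F)
    (hM : M = !![algebraMap O F ϖ, algebraMap O F ϖ ^ (1 - 2 * (m : ℤ)) * algebraMap O F x;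
          0, (algebraMap O F ϖ)⁻¹]) :
    (x ∈ IsLocalRing.maximalIdeal O ^ (2 * m - 2) → M ∈ K₀ * {α₀ (-1)} * I1) ∧
    (x ∉ IsLocalRing.maximalIdeal O ^ (2 * m - 2) →
      ∃ l : ℤ, l ≤ -2 ∧ M ∈ K₀ * {α₀ l} * I1) := by
  have inj : Function.Injective (algebraMap O F) := IsFractionRing.injective O F
  set π : F := algebraMap O F ϖ with hπdef
  have hπ0 : π ≠ 0 := by
    simpa [hπdef, map_eq_zero_iff _ inj] using hϖ.ne_zero
  have hmax : IsLocalRing.maximalIdeal O = Ideal.span {ϖ} := hϖ.maximalIdeal_eq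
  have hspanpow : (IsLocalRing.maximalIdeal O) ^ (2 * m - 2) =
      Ideal.span {ϖ ^ (2 * m - 2)} := by
    rw [hmax, Ideal.span_singleton_pow]
  have hNZ : ((2 * m - 2 : ℕ) : ℤ) = 2 * (m : ℤ) - 2 := by omega
  constructor
  · -- case 1
    intro hx
    rw [hspanpow, Ideal.mem_span_singleton] at hx
    obtain ⟨u, hu⟩ := hx
    set uF : F := algebraMap O F u with huF
    set A : Matrix (Fin 2) (Fin 2) F := !![1, uF; 0, 1] with hA
    set E : Matrix (Fin 2) (Fin 2) F := !![1, 0; 0, 1] with hE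
    have hAK : A ∈ K₀ := by
      rw [hK₀]
      refine ⟨by simp [hA, Matrix.det_fin_two_of], ?_⟩
      intro i j
      fin_cases i <;> fin_cases j
      · exact ⟨1, by simp [hA]⟩
      · exact ⟨u, by simp [hA, huF]⟩
      · exact ⟨0, by simp [hA]⟩
      · exact ⟨1, by simp [hA]⟩
    have hEI : E ∈ I1 := by
      rw [hI1]
      exact ⟨1, 0, 0, 1, by simp [hE], by ring,
        by simpa using Ideal.zero_mem _, by simpa using Ideal.zero_mem _,
        Ideal.zero_mem _⟩
    have hkey : π ^ (1 - 2 * (m : ℤ)) * algebraMap O F x = uF * π ^ (-1 : ℤ) := by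
      rw [hu, RingHom.map_mul, RingHom.map_pow, ← hπdef, ← huF, ← zpow_natCast π (2 * m - 2),
        mul_comm (π ^ ((2 * m - 2 : ℕ) : ℤ))]
      rw [mul_comm (π ^ (1 - 2 * (m : ℤ))), mul_assoc, ← zpow_add₀ hπ0, hNZ]
      norm_num
    have hMeq : M = A * α₀ (-1) * E := by
      rw [hM, hα₀, hA, hE, Matrix.mul_fin_two, Matrix.mul_fin_two]
      ext i j
      fin_cases i <;> fin_cases j <;>
        simp only [Matrix.cons_val_zero, Matrix.cons_val_one, Matrix.head_cons, Matrix.of_apply,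
          Matrix.cons_val', Matrix.empty_val', Matrix.cons_val_fin_one, Matrix.head_fin_const,
          Fin.zero_eta, Fin.mk_one, Fin.isValue]
      · norm_num
      · rw [hkey]; norm_num
      · norm_num
      · norm_num
    rw [hMeq]
    exact Set.mul_mem_mul (Set.mul_mem_mul hAK rfl) hEI
  · -- case 2
    intro hx
    have hx0 : x ≠ 0 := by rintro rfl; exact hx (Ideal.zero_mem _)
    obtain ⟨n, u, hxu⟩ := IsDiscreteValuationRing.eq_unit_mul_pow_irreducible hx0 hϖ
    have hn : n < 2 * m - 2 := by
      by_contra h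
      push_neg at h
      apply hx
      rw [hspanpow, Ideal.mem_span_singleton, hxu]
      exact Dvd.dvd.mul_left (pow_dvd_pow ϖ h) _
    set l : ℤ := 1 - 2 * (m : ℤ) + n with hl
    have hl2 : l ≤ -2 := by omega
    refine ⟨l, hl2, ?_⟩
    set v : O := ((u⁻¹ : Oˣ) : O) with hv
    set uF : F := algebraMap O F (u : O) with huF
    set vF : F := algebraMap O F v with hvF
    have huvF : uF * vF = 1 := by
      rw [huF, hvF, ← RingHom.map_mul, hv, u.mul_inv, RingHom.map_one]
    set e1 : ℕ := (-1 - l).toNat with he1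
    set e2 : ℕ := (1 - l).toNat with he2
    have he1Z : (e1 : ℤ) = -1 - l := Int.toNat_of_nonneg (by omega)
    have he2Z : (e2 : ℤ) = 1 - l := Int.toNat_of_nonneg (by omega)
    have he2pos : 0 < e2 := by omega
    set A : Matrix (Fin 2) (Fin 2) F := !![0, uF; -vF, π ^ e1] with hA
    set B : Matrix (Fin 2) (Fin 2) F := !![1, 0; algebraMap O F (ϖ ^ e2 * v), 1] with hB
    have hAK : A ∈ K₀ := by
      rw [hK₀]
      constructor
      · simp only [hA, Matrix.det_fin_two_of]
        linear_combination huvF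
      intro i j
      fin_cases i <;> fin_cases j
      · exact ⟨0, by simp [hA]⟩
      · exact ⟨u, by simp [hA, huF]⟩
      · exact ⟨-v, by simp [hA, hvF]⟩
      · exact ⟨ϖ ^ e1, by simp [hA, hπdef, RingHom.map_pow]⟩
    have hBI : B ∈ I1 := by
      rw [hI1]
      refine ⟨1, 0, ϖ ^ e2 * v, 1, by simp [hB], by ring,
        by simpa using Ideal.zero_mem _, by simpa using Ideal.zero_mem _, ?_⟩
      rw [hmax]
      exact Ideal.mul_mem_right _ _
        (Ideal.pow_mem_of_mem _ (Ideal.mem_span_singleton_self ϖ) _ he2pos)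
    have hcF : algebraMap O F (ϖ ^ e2 * v) = π ^ e2 * vF := by
      rw [RingHom.map_mul, RingHom.map_pow, ← hπdef, ← hvF]
    have hxF : algebraMap O F x = uF * π ^ (n : ℤ) := by
      rw [hxu, RingHom.map_mul, RingHom.map_pow, ← hπdef, ← huF, zpow_natCast]
    have hpe2 : π ^ l * π ^ e2 = π := by
      rw [← zpow_natCast π e2, ← zpow_add₀ hπ0, he2Z, show l + (1 - l) = 1 by ring, zpow_one]
    have hpe1 : π ^ e1 * π ^ l = π ^ (-1 : ℤ) := by
      rw [← zpow_natCast π e1, ← zpow_add₀ hπ0, he1Z, show -1 - l + l = (-1 : ℤ) by ring]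
    have hp3 : π ^ e1 * π ^ l * π ^ e2 = π ^ (-l) := by
      rw [hpe1, ← zpow_natCast π e2, ← zpow_add₀ hπ0, he2Z, show -1 + (1 - l) = -l by ring]
    have hMeq : M = A * α₀ l * B := by
      rw [hM, hα₀, hA, hB, Matrix.mul_fin_two, Matrix.mul_fin_two]
      ext i j
      fin_cases i <;> fin_cases j <;>
        simp only [Matrix.cons_val_zero, Matrix.cons_val_one, Matrix.head_cons, Matrix.of_apply,
          Matrix.cons_val', Matrix.empty_val', Matrix.cons_val_fin_one, Matrix.head_fin_const,
          Fin.zero_eta, Fin.mk_one, Fin.isValue]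
      · -- π = (0*π^(-l)+uF*0)*1 + (0*0+uF*π^l)*(π^e2*vF)
        rw [hcF]
        linear_combination (-(π ^ l * π ^ e2)) * huvF - hpe2
      · -- π^(1-2m)*xF = uF*π^l
        rw [hxF, ← mul_assoc, mul_comm (π ^ (1 - 2 * (m : ℤ))) uF, mul_assoc,
          ← zpow_add₀ hπ0, ← hl]
        ring
      · rw [hcF]
        linear_combination (-vF) * hp3
      · simp only [mul_zero, zero_mul, add_zero, zero_add, mul_one, neg_zero]
        rw [hpe1, _root_.zpow_neg_one]
    rw [hMeq]
    exact Set.mul_mem_mul (Set.mul_mem_mul hAK rfl) hBI
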